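/- Fixing g ∈ ℝ^m, the choice f = g^{c̄,ε}, where g^{c̄,ε}_i = ε log(a_i) − ε log ∑_j e^{(g_j − C_{ij})/ε}, maximizes the dual objective (f,g) ↦ ⟨f,a⟩ + ⟨g,b⟩ − ε ∑_{i,j} e^{(f_i + g_j − C_{ij})/ε} over f ∈ ℝ^n. -/

import Mathlib

open Finset Real

theorem stmt15 {n m : ℕ} (a : Fin n → ℝ) (b : Fin m → ℝ)
    (ha : (∀ i, 0 < a i) ∧ ∑ i, a i = 1) (hb : (∀ j, 0 ≤ b j) ∧ ∑ j, b j = 1)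
    (C : Matrix (Fin n) (Fin m) ℝ) (ε : ℝ) (hε : 0 < ε)
    (g : Fin m → ℝ) :
    IsMaxOn
      (fun f : Fin n → ℝ =>
        ∑ i, f i * a i + ∑ j, g j * b j
          - ε * ∑ i, ∑ j, Real.exp ((f i + g j - C i j) / ε))
      Set.univ
      (fun i => ε * Real.log (a i)
        - ε * Real.log (∑ j, Real.exp ((g j - C i j) / ε))) := by
  obtain ⟨ha1, ha2⟩ := ha
  obtain ⟨hb1, hb2⟩ := hb
  have hm : 0 < m := by
    rcases Nat.eq_zero_or_pos m with h | h
    · subst h; simp at hb2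
    · exact h
  haveI : Nonempty (Fin m) := ⟨⟨0, hm⟩⟩
  set F : Fin n → ℝ := fun i => ε * Real.log (a i)
      - ε * Real.log (∑ j, Real.exp ((g j - C i j) / ε)) with hF
  intro f _
  simp only [Set.mem_setOf_eq]
  have key : ∀ i, f i * a i - ε * ∑ j, Real.exp ((f i + g j - C i j) / ε)
      ≤ F i * a i - ε * ∑ j, Real.exp ((F i + g j - C i j) / ε) := by
    intro i
    have hS : 0 < ∑ j, Real.exp ((g j - C i j) / ε) :=
      Finset.sum_pos (fun j _ => Real.exp_pos _) Finset.univ_nonempty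
    have h1 : ∀ c : ℝ, ∑ j, Real.exp ((c + g j - C i j) / ε)
        = Real.exp (c / ε) * ∑ j, Real.exp ((g j - C i j) / ε) := by
      intro c
      rw [Finset.mul_sum]
      refine Finset.sum_congr rfl fun j _ => ?_
      rw [← Real.exp_add]
      congr 1
      rw [← add_div]
      ring_nf
    have hFexp : Real.exp (F i / ε) = a i / (∑ j, Real.exp ((g j - C i j) / ε)) := by
      have : F i / ε = Real.log (a i) - Real.log (∑ j, Real.exp ((g j - C i j) / ε)) := by
        rw [hF]; field_simp
      rw [this, Real.exp_sub, Real.exp_log (ha1 i), Real.exp_log hS]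
    rw [h1, h1, hFexp]
    have hx : (f i - F i) / ε + 1 ≤ Real.exp ((f i - F i) / ε) := Real.add_one_le_exp _
    have hfi : Real.exp (f i / ε) = Real.exp ((f i - F i) / ε) * Real.exp (F i / ε) := by
      rw [← Real.exp_add]; congr 1; ring
    rw [hfi, hFexp]
    have hS' : (∑ j, Real.exp ((g j - C i j) / ε)) ≠ 0 := ne_of_gt hS
    have hA : Real.exp ((f i - F i) / ε) * (a i / (∑ j, Real.exp ((g j - C i j) / ε)))
        * (∑ j, Real.exp ((g j - C i j) / ε)) = Real.exp ((f i - F i) / ε) * a i := by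
      field_simp
    have hB : (a i / (∑ j, Real.exp ((g j - C i j) / ε)))
        * (∑ j, Real.exp ((g j - C i j) / ε)) = a i := by
      field_simp
    rw [hA, hB]
    have hεx : f i - F i = ε * ((f i - F i) / ε) := by field_simp
    nlinarith [mul_pos hε (ha1 i), ha1 i, mul_le_mul_of_nonneg_left hx (le_of_lt (mul_pos hε (ha1 i)))]
  have hsum := Finset.sum_le_sum (s := Finset.univ) (fun i _ => key i)
  rw [Finset.sum_sub_distrib, Finset.sum_sub_distrib, ← Finset.mul_sum, ← Finset.mul_sum] at hsum
  linarith
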